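/- Let F be a free group, N a normal subgroup of F such that N′ = [N,N] is torsion-free as a quotient context (F/N′ torsion-free), and let φ : F/N′ → M(F/N) be the Magnus embedding. Then two elements x̄, ȳ ∈ F/N′ are conjugate in F/N′ if and only if φ(x̄) and φ(ȳ) are conjugate in M(F/N). -/

import Mathlib

/-- The Magnus matrix group `M(Q)` (for `Q = F/N`): matrices `((g, u), (0, 1))` with
`g ∈ Q` and `u` in the free `ℤ(Q)`-module of rank `r`, under matrix multiplication
`(g,u)·(g',u') = (g g', g·u' + u)`. -/
@[ext] structure Magnus (r : ℕ) (Q : Type) [Group Q] where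
  g : Q
  u : Fin r → MonoidAlgebra ℤ Q

namespace Magnus

variable {r : ℕ} {Q : Type} [Group Q]

noncomputable instance : Mul (Magnus r Q) :=
  ⟨fun x y => ⟨x.g * y.g, fun i => MonoidAlgebra.single x.g (1 : ℤ) * y.u i + x.u i⟩⟩

noncomputable instance : One (Magnus r Q) := ⟨⟨1, 0⟩⟩

noncomputable instance : Inv (Magnus r Q) :=
  ⟨fun x => ⟨x.g⁻¹, fun i => -(MonoidAlgebra.single x.g⁻¹ (1 : ℤ) * x.u i)⟩⟩

@[simp] lemma mul_g (x y : Magnus r Q) : (x * y).g = x.g * y.g := rfl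
@[simp] lemma mul_u (x y : Magnus r Q) (i : Fin r) :
    (x * y).u i = MonoidAlgebra.single x.g (1 : ℤ) * y.u i + x.u i := rfl
@[simp] lemma one_g : (1 : Magnus r Q).g = 1 := rfl
@[simp] lemma one_u (i : Fin r) : (1 : Magnus r Q).u i = 0 := rfl
@[simp] lemma inv_g (x : Magnus r Q) : (x⁻¹).g = x.g⁻¹ := rfl
@[simp] lemma inv_u (x : Magnus r Q) (i : Fin r) :
    (x⁻¹).u i = -(MonoidAlgebra.single x.g⁻¹ (1 : ℤ) * x.u i) := rfl

noncomputable instance : Group (Magnus r Q) where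
  mul_assoc x y z := by
    refine Magnus.ext ?_ ?_
    · simp [mul_assoc]
    · funext i
      simp [mul_add, add_assoc, ← mul_assoc, MonoidAlgebra.single_mul_single]
  one_mul x := by
    refine Magnus.ext ?_ ?_
    · simp
    · funext i; simp [MonoidAlgebra.one_def.symm]
  mul_one x := by
    refine Magnus.ext ?_ ?_
    · simp
    · funext i; simp
  inv_mul_cancel x := by
    refine Magnus.ext ?_ ?_
    · simp
    · funext i; simp [← mul_assoc, MonoidAlgebra.single_mul_single]

end Magnus


namespace RS
open MonoidAlgebra

variable {r : ℕ} {Q : Type} [Group Q]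

/-- The projection `Magnus r Q →* Q`. -/
def gHom : Magnus r Q →* Q where
  toFun := Magnus.g
  map_one' := rfl
  map_mul' _ _ := rfl

/-- The canonical homomorphism from the free group determined by images `q i` of
generators. -/
noncomputable def Psi (q : Fin r → Q) : FreeGroup (Fin r) →* Magnus r Q :=
  FreeGroup.lift fun i => { g := q i, u := Pi.single i 1 }

@[simp] lemma Psi_of (q : Fin r → Q) (i : Fin r) :
    Psi q (FreeGroup.of i) = ⟨q i, Pi.single i 1⟩ := FreeGroup.lift_apply_of

lemma Psi_g (q : Fin r → Q) (f : FreeGroup (Fin r)) :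
    (Psi q f).g = FreeGroup.lift q f := by
  have : gHom.comp (Psi q) = FreeGroup.lift q := by
    apply FreeGroup.ext_hom
    intro i
    simp [gHom, Psi_of]
  exact congrArg (fun h => h f) this ▸ rfl

/-- The "Fox" linear map `u ↦ ∑ u i * (single (q i) 1 - 1)`. -/
noncomputable def alph (q : Fin r → Q) (u : Fin r → MonoidAlgebra ℤ Q) : MonoidAlgebra ℤ Q :=
  ∑ i, u i * (single (q i) 1 - 1)

lemma alph_add (q : Fin r → Q) (u v : Fin r → MonoidAlgebra ℤ Q) :
    alph q (u + v) = alph q u + alph q v := by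
  simp [alph, add_mul, Finset.sum_add_distrib]

/-- Bundled version of `alph`. -/
noncomputable def alphHom (q : Fin r → Q) : (Fin r → MonoidAlgebra ℤ Q) →+ MonoidAlgebra ℤ Q :=
  AddMonoidHom.mk' (alph q) (alph_add q)

lemma alph_sub (q : Fin r → Q) (u v : Fin r → MonoidAlgebra ℤ Q) :
    alph q (u - v) = alph q u - alph q v := map_sub (alphHom q) u v

lemma alph_mulLeft (q : Fin r → Q) (b : MonoidAlgebra ℤ Q) (u : Fin r → MonoidAlgebra ℤ Q) :
    alph q (fun i => b * u i) = b * alph q u := by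
  simp [alph, Finset.mul_sum, mul_assoc]

lemma alph_pi_single (q : Fin r → Q) (i : Fin r) :
    alph q (Pi.single i 1) = single (q i) 1 - 1 := by
  rw [alph, Finset.sum_eq_single i]
  · simp
  · intro j _ hj; simp [Pi.single_apply, hj]
  · simp

lemma P_mul (q : Fin r → Q) (m m' : Magnus r Q)
    (hm : alph q m.u = single m.g 1 - 1) (hm' : alph q m'.u = single m'.g 1 - 1) :
    alph q (m * m').u = single (m * m').g 1 - 1 := by
  have hu : (m * m').u =
      (fun i => single m.g (1:ℤ) * m'.u i) + m.u := by
    funext i; simp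
  rw [hu, alph_add, alph_mulLeft, hm, hm', Magnus.mul_g]
  simp [mul_sub, single_mul_single, sub_add_sub_cancel]

lemma P_inv (q : Fin r → Q) (m : Magnus r Q)
    (hm : alph q m.u = single m.g 1 - 1) :
    alph q m⁻¹.u = single m⁻¹.g 1 - 1 := by
  have hu : m⁻¹.u = fun i => (-single m.g⁻¹ (1:ℤ)) * m.u i := by
    funext i; rw [neg_mul]; rfl
  rw [hu, alph_mulLeft, hm, Magnus.inv_g]
  simp [neg_mul, mul_sub, single_mul_single, ← MonoidAlgebra.one_def]
  abel

/-- The fundamental Fox identity for elements in the range of `Psi`. -/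
lemma fundId (q : Fin r → Q) (f : FreeGroup (Fin r)) :
    alph q ((Psi q f).u) = single ((Psi q f).g) 1 - 1 := by
  induction f using FreeGroup.induction_on with
  | C1 => simp [alph, ← MonoidAlgebra.one_def]
  | of i =>
      rw [Psi_of]
      exact alph_pi_single q i
  | inv_of i h =>
      rw [map_inv]
      exact P_inv q _ h
  | mul a b ha hb =>
      rw [map_mul]
      exact P_mul q _ _ ha hb

/-- Conjugation by an element with trivial `g`-part. -/
lemma conj_one (w : Fin r → MonoidAlgebra ℤ Q) (m : Magnus r Q) :
    (⟨1, w⟩ : Magnus r Q) * m * (⟨1, w⟩ : Magnus r Q)⁻¹ =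
      ⟨m.g, fun i => m.u i + (1 - single m.g 1) * w i⟩ := by
  refine Magnus.ext ?_ ?_
  · simp
  · funext i
    show single ((1:Q) * m.g) (1:ℤ) * (-(single (1:Q)⁻¹ (1:ℤ) * w i)) +
        (single (1:Q) (1:ℤ) * m.u i + w i) = _
    simp only [one_mul, inv_one, ← MonoidAlgebra.one_def]
    rw [sub_mul, one_mul, mul_neg]
    abel

/-- Conjugating an element with trivial `g`-part. -/
lemma conj_of_one (m : Magnus r Q) (u : Fin r → MonoidAlgebra ℤ Q) :
    m * (⟨1, u⟩ : Magnus r Q) * m⁻¹ = ⟨1, fun i => single m.g 1 * u i⟩ := by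
  refine Magnus.ext ?_ ?_
  · simp
  · funext i
    show single (m.g * (1:Q)) (1:ℤ) * (-(single m.g⁻¹ (1:ℤ) * m.u i)) +
        (single m.g (1:ℤ) * u i + m.u i) = _
    rw [mul_one, mul_neg, ← mul_assoc, single_mul_single, mul_inv_cancel, mul_one,
      ← MonoidAlgebra.one_def, one_mul]
    show _ = single m.g (1:ℤ) * u i
    abel

section Fox

local notation "F" => FreeGroup (Fin r)
local notation "B" => MonoidAlgebra ℤ (FreeGroup (Fin r))

/-- The Fox derivative of an element of the free group. -/
noncomputable def D (f : F) : Fin r → B := (Psi FreeGroup.of f).u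

lemma PsiF_g (f : F) : (Psi (FreeGroup.of : Fin r → F) f).g = f := by
  rw [Psi_g]
  have : (FreeGroup.lift (FreeGroup.of : Fin r → F)) = MonoidHom.id F := by
    apply FreeGroup.ext_hom; intro i; simp
  rw [this]; rfl

lemma fundIdF (f : F) : alph FreeGroup.of (D f) = single f 1 - 1 := by
  have := fundId (FreeGroup.of : Fin r → F) f
  rwa [PsiF_g] at this

lemma D_mul_of (f : F) (j i : Fin r) :
    D (f * FreeGroup.of j) i = single f (1:ℤ) * (if i = j then 1 else 0) + D f i := by
  show (Psi FreeGroup.of (f * FreeGroup.of j)).u i = _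
  rw [map_mul]
  simp [D, PsiF_g, Pi.single_apply]

/-- The `i`-th coordinate "integration" map. -/
noncomputable def gam (i : Fin r) : B →+ B :=
  (Finsupp.liftAddHom fun f => zmultiplesHom _ (D f i)).comp
    MonoidAlgebra.coeffAddEquiv.toAddMonoidHom

lemma gam_single (i : Fin r) (f : F) (c : ℤ) :
    gam i (single f c) = c • D f i := by
  exact Finsupp.liftAddHom_apply_single _ f c

lemma gam_mul_gen (i j : Fin r) (v : B) :
    gam i (v * (single (FreeGroup.of j) 1 - 1)) = if i = j then v else 0 := by
  induction v using MonoidAlgebra.induction_linear with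
  | zero => simp
  | add f g hf hg =>
      rw [add_mul, map_add, hf, hg]
      by_cases h : i = j <;> simp [h]
  | single f c =>
      have hexp : (single f c : B) * (single (FreeGroup.of j) 1 - 1) =
          single (f * FreeGroup.of j) c - single f c := by
        rw [mul_sub, mul_one, single_mul_single, mul_one]
      rw [hexp, map_sub, gam_single, gam_single, D_mul_of]
      rcases eq_or_ne i j with rfl | hij
      · simp [smul_add, Finsupp.smul_single]
      · simp [hij]

lemma fox_inj (v : Fin r → B) (h : alph FreeGroup.of v = 0) : v = 0 := by
  funext i
  have := congrArg (gam i) h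
  rw [alph, map_sum, map_zero] at this
  simp only [gam_mul_gen] at this
  simp only [Finset.sum_ite_eq, Finset.mem_univ, if_true] at this
  simpa using this

end Fox

section Quot

local notation "F" => FreeGroup (Fin r)
local notation "B" => MonoidAlgebra ℤ (FreeGroup (Fin r))

variable (N : Subgroup (FreeGroup (Fin r))) [N.Normal]

local notation "Qn" => FreeGroup (Fin r) ⧸ N
local notation "A" => MonoidAlgebra ℤ (FreeGroup (Fin r) ⧸ N)

/-- The induced map of group rings. -/
noncomputable def piN : MonoidAlgebra ℤ (FreeGroup (Fin r)) →+*
    MonoidAlgebra ℤ (FreeGroup (Fin r) ⧸ N) :=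
  MonoidAlgebra.mapDomainRingHom ℤ (QuotientGroup.mk' N)

@[simp] lemma piN_single (f : F) (c : ℤ) :
    piN N (single f c) = single (QuotientGroup.mk f : Qn) c := MonoidAlgebra.mapDomain_single

/-- The generator images in the quotient. -/
noncomputable def qn : Fin r → Qn := fun i => QuotientGroup.mk (FreeGroup.of i)

lemma PsiQ_g (f : F) : (Psi (qn N) f).g = (QuotientGroup.mk f : Qn) := by
  rw [Psi_g]
  have : FreeGroup.lift (qn N) = QuotientGroup.mk' N := by
    apply FreeGroup.ext_hom; intro i; simp [qn]
  rw [this]; rfl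

lemma piN_alph (v : Fin r → B) :
    piN N (alph FreeGroup.of v) = alph (qn N) (fun i => piN N (v i)) := by
  rw [alph, alph, map_sum]
  refine Finset.sum_congr rfl fun i _ => ?_
  rw [map_mul, map_sub, map_one, piN_single]
  rfl

lemma piN_surj (a : A) : ∃ b : B, piN N b = a := by
  induction a using MonoidAlgebra.induction_linear with
  | zero => exact ⟨0, map_zero _⟩
  | add f g hf hg =>
      obtain ⟨b, hb⟩ := hf; obtain ⟨c, hc⟩ := hg
      exact ⟨b + c, by rw [map_add, hb, hc]⟩
  | single p c =>
      exact ⟨single p.out c, by rw [piN_single, QuotientGroup.out_eq']⟩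

/-- The induced homomorphism of Magnus groups. -/
noncomputable def mapM : Magnus r (FreeGroup (Fin r)) →* Magnus r Qn where
  toFun m := ⟨QuotientGroup.mk m.g, fun i => piN N (m.u i)⟩
  map_one' := by
    refine Magnus.ext ?_ ?_
    · simp
    · funext i; simp
  map_mul' m m' := by
    refine Magnus.ext ?_ ?_
    · simp
    · funext i
      show piN N (single m.g 1 * m'.u i + m.u i) = _
      rw [map_add, map_mul, piN_single]
      rfl

@[simp] lemma mapM_g (m : Magnus r (FreeGroup (Fin r))) :
    (mapM N m).g = QuotientGroup.mk m.g := rfl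
@[simp] lemma mapM_u (m : Magnus r (FreeGroup (Fin r))) (i : Fin r) :
    (mapM N m).u i = piN N (m.u i) := rfl

lemma mapM_Psi (f : F) : mapM N (Psi FreeGroup.of f) = Psi (qn N) f := by
  have : (mapM N).comp (Psi FreeGroup.of) = Psi (qn N) := by
    apply FreeGroup.ext_hom
    intro i
    rw [MonoidHom.comp_apply, Psi_of, Psi_of]
    refine Magnus.ext rfl ?_
    funext j
    rw [mapM_u]
    rcases eq_or_ne j i with rfl | hj
    · simp
    · simp [Pi.single_apply, hj]
  exact congrArg (fun h => h f) this

/-- Generators of the kernel of `piN`. -/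
def kerGen : Set (MonoidAlgebra ℤ (FreeGroup (Fin r))) :=
  {x | ∃ a n, n ∈ N ∧ x = single (a * n) (1:ℤ) - single a 1}

open scoped Classical in
lemma piN_apply (v : B) (p : Qn) :
    (piN N v).coeff p = ∑ x ∈ v.coeff.support, if (QuotientGroup.mk x : Qn) = p then v.coeff x else 0 := by
  classical
  have : (piN N v).coeff = v.coeff.sum fun x c => Finsupp.single (QuotientGroup.mk x : Qn) c := rfl
  rw [this, Finsupp.sum, Finset.sum_apply']
  refine Finset.sum_congr rfl fun x _ => ?_
  rw [Finsupp.single_apply]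

lemma ker_span (v : B) (hv : piN N v = 0) : v ∈ AddSubgroup.closure (kerGen N) := by
  classical
  generalize hn : v.coeff.support.card = n
  induction n using Nat.strong_induction_on generalizing v with
  | _ n ih =>
    rcases eq_or_ne v 0 with rfl | hv0
    · exact zero_mem _
    · obtain ⟨a, ha⟩ := Finsupp.support_nonempty_iff.mpr (MonoidAlgebra.coeff_eq_zero.not.mpr hv0)
      have hsum : ∑ x ∈ v.coeff.support, (if (QuotientGroup.mk x : Qn) = QuotientGroup.mk a then v.coeff x else 0) = 0 := by
        rw [← piN_apply, hv]; rfl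
      have hex : ∃ b ∈ v.coeff.support, b ≠ a ∧ (QuotientGroup.mk b : Qn) = QuotientGroup.mk a := by
        by_contra hno
        push_neg at hno
        rw [Finset.sum_eq_single_of_mem a ha (fun b hb hba => ?_)] at hsum
        · rw [if_pos rfl] at hsum
          exact (Finsupp.mem_support_iff.mp ha) hsum
        · rcases eq_or_ne (QuotientGroup.mk b : Qn) (QuotientGroup.mk a) with h | h
          · exact absurd h (hno b hb hba)
          · rw [if_neg h]
      obtain ⟨b, hb, hba, hmk⟩ := hex
      -- b = a * n with n ∈ N
      have hmem : a⁻¹ * b ∈ N := QuotientGroup.eq.mp hmk.symm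
      have hab : a * (a⁻¹ * b) = b := by group
      set e : B := single b (1:ℤ) - single a 1 with he
      have hegen : e ∈ kerGen N := ⟨a, a⁻¹ * b, hmem, by rw [hab]⟩
      set v' : B := v + (v.coeff a) • e with hv'
      have hπe : piN N e = 0 := by
        rw [he, map_sub, piN_single, piN_single, hmk, sub_self]
      have hπv' : piN N v' = 0 := by
        rw [hv', map_add, hv, map_zsmul, hπe, smul_zero, add_zero]
      have hea : e.coeff a = -1 := by
        rw [he, MonoidAlgebra.coeff_sub, MonoidAlgebra.coeff_single, MonoidAlgebra.coeff_single, Finsupp.sub_apply, Finsupp.single_apply, Finsupp.single_apply,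
          if_neg hba, if_pos rfl]
        simp
      have hv'a : v'.coeff a = 0 := by
        rw [hv', MonoidAlgebra.coeff_add, MonoidAlgebra.coeff_smul, Finsupp.add_apply, Finsupp.smul_apply, hea]
        simp
      have hsupp : v'.coeff.support ⊆ v.coeff.support.erase a := by
        intro x hx
        have hxv' : v'.coeff x ≠ 0 := Finsupp.mem_support_iff.mp hx
        have hxa : x ≠ a := fun h => hxv' (h ▸ hv'a)
        refine Finset.mem_erase.mpr ⟨hxa, ?_⟩
        by_contra hxv
        have hvx : v.coeff x = 0 := Finsupp.notMem_support_iff.mp hxv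
        have hxb : x ≠ b := fun h => (h ▸ hxv) hb
        have hex : e.coeff x = 0 := by
          rw [he, MonoidAlgebra.coeff_sub, MonoidAlgebra.coeff_single, MonoidAlgebra.coeff_single, Finsupp.sub_apply, Finsupp.single_apply, Finsupp.single_apply,
            if_neg (Ne.symm hxb), if_neg (Ne.symm hxa)]
          simp
        apply hxv'
        rw [hv', MonoidAlgebra.coeff_add, MonoidAlgebra.coeff_smul, Finsupp.add_apply, Finsupp.smul_apply, hex, hvx]
        simp
      have hcard : v'.coeff.support.card < n := by
        calc v'.coeff.support.card ≤ (v.coeff.support.erase a).card := Finset.card_le_card hsupp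
        _ < v.coeff.support.card := Finset.card_erase_lt_of_mem ha
        _ = n := hn
      have hv'mem : v' ∈ AddSubgroup.closure (kerGen N) := ih _ hcard v' hπv' rfl
      have : v = v' - (v.coeff a) • e := by rw [hv']; abel
      rw [this]
      exact sub_mem hv'mem (zsmul_mem (AddSubgroup.subset_closure hegen) _)

/-- The additive subgroup of those `u` with `⟨1,u⟩` in the range of `Psi (qn N)`. -/
noncomputable def V : AddSubgroup (Fin r → A) where
  carrier := {u | (⟨1, u⟩ : Magnus r Qn) ∈ (Psi (qn N)).range}
  zero_mem' := ⟨1, by rw [map_one]; rfl⟩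
  add_mem' := by
    rintro u u' ⟨f, hf⟩ ⟨f', hf'⟩
    refine ⟨f * f', ?_⟩
    rw [map_mul, hf, hf']
    refine Magnus.ext (by simp) ?_
    funext i
    show single (1:Qn) 1 * u' i + u i = (u + u') i
    rw [← MonoidAlgebra.one_def, one_mul]
    simp [add_comm]
  neg_mem' := by
    rintro u ⟨f, hf⟩
    refine ⟨f⁻¹, ?_⟩
    rw [map_inv, hf]
    refine Magnus.ext (by simp) ?_
    funext i
    show -(single ((1:Qn))⁻¹ 1 * u i) = (-u) i
    rw [inv_one, ← MonoidAlgebra.one_def, one_mul]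
    rfl

lemma V_smul (q : Qn) (u : Fin r → A) (hu : u ∈ V N) :
    (fun i => single q (1:ℤ) * u i) ∈ V N := by
  obtain ⟨f, hf⟩ := hu
  obtain ⟨b, hb⟩ : ∃ b : F, (QuotientGroup.mk b : Qn) = q := ⟨q.out, QuotientGroup.out_eq' q⟩
  refine ⟨b * f * b⁻¹, ?_⟩
  rw [map_mul, map_mul, map_inv, hf, conj_of_one, PsiQ_g, hb]

/-- The componentwise group ring map. -/
noncomputable def pivec : (Fin r → B) →+ (Fin r → A) :=
  AddMonoidHom.mk' (fun v i => piN N (v i)) (by intro u v; funext i; exact map_add _ _ _)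

lemma Psi_mem_N (n : F) (hn : n ∈ N) :
    Psi (qn N) n = (⟨1, fun i => piN N (D n i)⟩ : Magnus r Qn) := by
  rw [← mapM_Psi]
  refine Magnus.ext ?_ rfl
  show (QuotientGroup.mk ((Psi FreeGroup.of n).g) : Qn) = 1
  rw [PsiF_g]
  exact (QuotientGroup.eq_one_iff n).mpr hn

/-- Magnus' theorem: any `u` killed by `alph` gives an element of the image. -/
lemma alph_zero_mem (u : Fin r → A) (h : alph (qn N) u = 0) :
    (⟨1, u⟩ : Magnus r Qn) ∈ (Psi (qn N)).range := by
  classical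
  choose v hv using fun i => piN_surj N (u i)
  have hker : piN N (alph FreeGroup.of v) = 0 := by
    rw [piN_alph]
    have huv : (fun i => piN N (v i)) = u := funext hv
    rw [huv, h]
  have hspan := ker_span N _ hker
  set Wgen : Set (Fin r → B) := {x | ∃ a n, n ∈ N ∧ x = fun i => single a (1:ℤ) * D n i}
    with hWgen
  set W := AddSubgroup.closure Wgen with hW
  have hmap : AddSubgroup.closure (kerGen N) ≤ AddSubgroup.map (alphHom FreeGroup.of) W := by
    rw [AddSubgroup.closure_le]
    rintro x ⟨a, n, hn, rfl⟩
    refine ⟨fun i => single a (1:ℤ) * D n i, AddSubgroup.subset_closure ⟨a, n, hn, rfl⟩, ?_⟩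
    show alph FreeGroup.of _ = _
    rw [alph_mulLeft, fundIdF, mul_sub, mul_one, single_mul_single, mul_one]
  obtain ⟨v', hv'W, hv'⟩ := hmap hspan
  have hvv' : v = v' := by
    have hz : alph FreeGroup.of (v - v') = 0 := by
      rw [alph_sub]
      have h2 : alph FreeGroup.of v' = alph FreeGroup.of v := hv'
      rw [h2, sub_self]
    exact sub_eq_zero.mp (fox_inj _ hz)
  have hle : W ≤ (V N).comap (pivec N) := by
    rw [hW, AddSubgroup.closure_le]
    rintro x ⟨a, n, hn, rfl⟩
    show (fun i => piN N (single a (1:ℤ) * D n i)) ∈ V N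
    have hbase : (fun i => piN N (D n i)) ∈ V N := ⟨n, Psi_mem_N N n hn⟩
    have hsm := V_smul N (QuotientGroup.mk a) _ hbase
    have : (fun i => piN N (single a (1:ℤ) * D n i)) =
        fun i => single (QuotientGroup.mk a : Qn) (1:ℤ) * piN N (D n i) := by
      funext i; rw [map_mul, piN_single]
    rw [this]
    exact hsm
  have hvW : v ∈ W := hvv' ▸ hv'W
  have : pivec N v ∈ V N := hle hvW
  have hpv : pivec N v = u := funext hv
  rw [hpv] at this
  exact this

end Quot

section Reg

/-- Augmentation map. -/
noncomputable def aug : MonoidAlgebra ℤ Q →ₐ[ℤ] ℤ := MonoidAlgebra.lift ℤ ℤ Q 1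

@[simp] lemma aug_single (q : Q) (c : ℤ) : aug (single q c) = c := by
  rw [aug, MonoidAlgebra.lift_single]
  simp

lemma aug_alph (q : Fin r → Q) (u : Fin r → MonoidAlgebra ℤ Q) : aug (alph q u) = 0 := by
  rw [alph, map_sum]
  refine Finset.sum_eq_zero fun i _ => ?_
  rw [map_mul, map_sub, map_one, aug_single]
  ring

lemma shift_invariant {g : Q} {t : MonoidAlgebra ℤ Q} (hst : single g 1 * t = t) (b : Q) :
    t.coeff (g⁻¹ * b) = t.coeff b := by
  conv_rhs => rw [← hst]
  rw [MonoidAlgebra.coeff_single_mul_apply, one_mul]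

lemma reg_of_infinite (g : Q) (hg : ¬IsOfFinOrder g) (t : MonoidAlgebra ℤ Q)
    (ht : (1 - single g 1) * t = 0) : t = 0 := by
  have hst : single g 1 * t = t := by
    rw [sub_mul, one_mul, sub_eq_zero] at ht
    exact ht.symm
  by_contra ht0
  obtain ⟨a, ha⟩ := Finsupp.support_nonempty_iff.mpr (MonoidAlgebra.coeff_eq_zero.not.mpr ht0)
  have hk : ∀ k : ℕ, t.coeff ((g⁻¹) ^ k * a) = t.coeff a := by
    intro k
    induction k with
    | zero => simp
    | succ k ih => rw [pow_succ', mul_assoc, shift_invariant hst, ih]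
  have hmem : ∀ k : ℕ, (g⁻¹) ^ k * a ∈ t.coeff.support := fun k =>
    Finsupp.mem_support_iff.mpr (by rw [hk]; exact Finsupp.mem_support_iff.mp ha)
  have hginv : ¬IsOfFinOrder g⁻¹ := fun h => hg (isOfFinOrder_inv_iff.mp h)
  have hinj : Function.Injective (fun k : ℕ => (g⁻¹) ^ k * a) := by
    intro k l hkl
    simp only [mul_left_inj] at hkl
    exact injective_pow_iff_not_isOfFinOrder.mpr hginv hkl
  have hinf : (Set.range fun k : ℕ => (g⁻¹) ^ k * a).Infinite :=
    Set.infinite_range_of_injective hinj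
  refine hinf (t.coeff.support.finite_toSet.subset ?_)
  rintro _ ⟨k, rfl⟩
  exact hmem k

variable (g : Q) [Fintype (Subgroup.zpowers g)]

/-- The norm element of the cyclic subgroup generated by `g`. -/
noncomputable def sig : MonoidAlgebra ℤ Q :=
  ∑ h : Subgroup.zpowers g, single (h : Q) (1:ℤ)

lemma single_mul_sig : single g (1:ℤ) * sig g = sig g := by
  rw [sig, Finset.mul_sum]
  refine Fintype.sum_equiv (Equiv.mulLeft (⟨g, Subgroup.mem_zpowers g⟩ : Subgroup.zpowers g))
    _ _ fun h => ?_
  rw [single_mul_single, one_mul]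
  rfl

lemma aug_sig : aug (sig g) = (Fintype.card (Subgroup.zpowers g) : ℤ) := by
  rw [sig, map_sum]
  simp

lemma zpowers_invariant {t : MonoidAlgebra ℤ Q} (hst : single g 1 * t = t)
    (h : Subgroup.zpowers g) (b : Q) : t.coeff ((h : Q) * b) = t.coeff b := by
  obtain ⟨k, hk⟩ := h.2
  have main : ∀ k : ℤ, t.coeff (g ^ k * b) = t.coeff b := by
    intro k
    induction k using Int.induction_on with
    | zero => simp
    | succ k ih =>
        have hpow : g ^ ((k : ℤ) + 1) = g * g ^ (k : ℤ) := by
          rw [add_comm, zpow_add, zpow_one]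
        have hfwd : ∀ b' : Q, t.coeff (g * b') = t.coeff b' := by
          intro b'
          have := shift_invariant hst (g * b')
          rw [inv_mul_cancel_left] at this
          exact this.symm
        rw [hpow, mul_assoc, hfwd, ih]
    | pred k ih =>
        have hpow : g ^ (-(k : ℤ) - 1) = g⁻¹ * g ^ (-(k:ℤ)) := by
          rw [sub_eq_add_neg, add_comm, zpow_add, zpow_neg_one]
        rw [hpow, mul_assoc, shift_invariant hst, ih]
  rw [← hk]
  exact main k

lemma sigma_rep (t : MonoidAlgebra ℤ Q) (hst : single g 1 * t = t) :
    ∃ s, t = sig g * s := by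
  classical
  generalize hn : t.coeff.support.card = n
  induction n using Nat.strong_induction_on generalizing t with
  | _ n ih =>
    rcases eq_or_ne t 0 with rfl | ht0
    · exact ⟨0, by rw [mul_zero]⟩
    · obtain ⟨a, ha⟩ := Finsupp.support_nonempty_iff.mpr (MonoidAlgebra.coeff_eq_zero.not.mpr ht0)
      set c : ℤ := t.coeff a with hc
      set e : MonoidAlgebra ℤ Q := sig g * single a c with he
      have heval : ∀ b : Q, e.coeff b = ∑ h : Subgroup.zpowers g,
          (if (h : Q) * a = b then c else 0) := by
        intro b
        rw [he, sig, Finset.sum_mul, MonoidAlgebra.coeff_sum, Finset.sum_apply']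
        refine Finset.sum_congr rfl fun h _ => ?_
        rw [single_mul_single, one_mul, MonoidAlgebra.coeff_single, Finsupp.single_apply]
      set t' : MonoidAlgebra ℤ Q := t - e with ht'
      have ht'val : ∀ b : Q, (¬ ∃ h : Subgroup.zpowers g, (h : Q) * a = b) → t'.coeff b = t.coeff b := by
        intro b hb
        rw [ht', MonoidAlgebra.coeff_sub, Finsupp.sub_apply, heval]
        rw [Finset.sum_eq_zero fun h _ => if_neg fun hh => hb ⟨h, hh⟩, sub_zero]
      have ht'orb : ∀ h : Subgroup.zpowers g, t'.coeff ((h : Q) * a) = 0 := by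
        intro h₀
        have : ∑ h : Subgroup.zpowers g, (if (h : Q) * a = (h₀ : Q) * a then c else 0) = c := by
          rw [Finset.sum_eq_single h₀]
          · rw [if_pos rfl]
          · intro h _ hh
            refine if_neg fun hha => hh ?_
            exact Subtype.ext (mul_right_cancel hha)
          · intro h; exact absurd (Finset.mem_univ h₀) h
        rw [ht', MonoidAlgebra.coeff_sub, Finsupp.sub_apply, heval, this, zpowers_invariant g hst, ← hc, sub_self]
      have hst' : single g 1 * t' = t' := by
        rw [ht', mul_sub, hst, he, ← mul_assoc, single_mul_sig]
      have hsupp : t'.coeff.support ⊆ t.coeff.support.erase a := by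
        intro x hx
        have hxne : t'.coeff x ≠ 0 := Finsupp.mem_support_iff.mp hx
        have hno : ¬ ∃ h : Subgroup.zpowers g, (h : Q) * a = x := by
          rintro ⟨h, rfl⟩
          exact hxne (ht'orb h)
        have hxa : x ≠ a := by
          rintro rfl
          exact hno ⟨1, one_mul _⟩
        refine Finset.mem_erase.mpr ⟨hxa, Finsupp.mem_support_iff.mpr ?_⟩
        rw [← ht'val x hno]
        exact hxne
      have hcard : t'.coeff.support.card < n := by
        calc t'.coeff.support.card ≤ (t.coeff.support.erase a).card := Finset.card_le_card hsupp
        _ < t.coeff.support.card := Finset.card_erase_lt_of_mem ha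
        _ = n := hn
      obtain ⟨s', hs'⟩ := ih _ hcard t' hst' rfl
      refine ⟨s' + single a c, ?_⟩
      rw [mul_add, ← hs', ← he, ht']
      abel

end Reg

section Key

local notation "F" => FreeGroup (Fin r)
local notation "B" => MonoidAlgebra ℤ (FreeGroup (Fin r))

variable (N : Subgroup (FreeGroup (Fin r))) [N.Normal]

local notation "Qn" => FreeGroup (Fin r) ⧸ N
local notation "A" => MonoidAlgebra ℤ (FreeGroup (Fin r) ⧸ N)

lemma alph_surj_aug (s : A) (hs : aug s = 0) : ∃ t, alph (qn N) t = s := by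
  classical
  set E : Qn → (Fin r → A) := fun p => fun i => piN N (D p.out i) with hE
  have hEp : ∀ p : Qn, alph (qn N) (E p) = single p 1 - 1 := by
    intro p
    have h1 := piN_alph N (D p.out)
    rw [fundIdF, map_sub, map_one, piN_single, QuotientGroup.out_eq'] at h1
    exact h1.symm
  refine ⟨s.coeff.sum fun p c => c • E p, ?_⟩
  show alphHom (qn N) _ = s
  rw [map_finsuppSum]
  have h2 : (s.coeff.sum fun p c => alphHom (qn N) (c • E p)) =
      s.coeff.sum fun p c => (single p c - c • (1:A)) := by
    refine Finsupp.sum_congr fun p _ => ?_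
    rw [map_zsmul]
    have : alphHom (qn N) (E p) = single p 1 - 1 := hEp p
    rw [this, smul_sub]
    congr 1
    rw [MonoidAlgebra.smul_single]
    norm_num
  rw [h2]
  have h3 : (s.coeff.sum fun p c => (single p c - c • (1:A))) =
      (s.coeff.sum fun p c => single p c) - s.coeff.sum fun p c => c • (1:A) := Finsupp.sum_sub
  rw [h3, MonoidAlgebra.sum_coeff_single]
  have h4 : (s.coeff.sum fun p c => c • (1:A)) = (∑ p ∈ s.coeff.support, s.coeff p) • (1:A) := by
    rw [Finsupp.sum, Finset.sum_smul]
  have h5 : (∑ p ∈ s.coeff.support, s.coeff p) = aug s := by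
    conv_rhs => rw [← MonoidAlgebra.sum_coeff_single s]
    rw [map_finsuppSum, Finsupp.sum]
    exact (Finset.sum_congr rfl fun p _ => (aug_single p (s.coeff p)).symm)
  rw [h4, h5, hs, zero_smul, sub_zero]

lemma key (g : Qn) (w : Fin r → A) (hw : (1 - single g 1) * alph (qn N) w = 0) :
    ∃ ρ : Fin r → A, alph (qn N) ρ = 0 ∧
      ∀ i, (1 - single g 1) * ρ i = (1 - single g 1) * w i := by
  by_cases hg : IsOfFinOrder g
  · haveI : Fintype (Subgroup.zpowers g) := (finite_zpowers.mpr hg).fintype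
    have hst : single g 1 * alph (qn N) w = alph (qn N) w := by
      rw [sub_mul, one_mul, sub_eq_zero] at hw
      exact hw.symm
    obtain ⟨s, hs⟩ := sigma_rep g _ hst
    have haug : aug s = 0 := by
      have h0 : aug (alph (qn N) w) = 0 := aug_alph _ _
      rw [hs, map_mul, aug_sig] at h0
      have hcard : ((Fintype.card (Subgroup.zpowers g) : ℤ)) ≠ 0 := by
        exact_mod_cast Fintype.card_ne_zero
      exact (mul_eq_zero.mp h0).resolve_left hcard
    obtain ⟨t, ht⟩ := alph_surj_aug N s haug
    refine ⟨fun i => w i - sig g * t i, ?_, fun i => ?_⟩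
    · have hrw : (fun i => w i - sig g * t i) = (w - fun i => sig g * t i) := rfl
      rw [hrw, alph_sub, alph_mulLeft, ht, ← hs, sub_self]
    · rw [mul_sub]
      have hz : (1 - single g 1) * (sig g * t i) = 0 := by
        rw [← mul_assoc, sub_mul, one_mul, single_mul_sig, sub_self, zero_mul]
      rw [hz, sub_zero]
  · have h0 : alph (qn N) w = 0 := reg_of_infinite g hg _ hw
    exact ⟨w, h0, fun i => rfl⟩

end Key

end RS







/-- Remeslennikov–Sokolov: if `F/N'` is torsion-free (`N' = [N,N]`) and
`φ : F/N' → M(F/N)` is the Magnus embedding (the injective homomorphism sending the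
class of the `i`-th generator to `((μ(x_i), u_i), (0,1))`), then `x̄, ȳ ∈ F/N'` are
conjugate in `F/N'` if and only if `φ(x̄)` and `φ(ȳ)` are conjugate in `M(F/N)`. -/
theorem magnus_embedding_preserves_conjugacy (r : ℕ)
    (N : Subgroup (FreeGroup (Fin r))) [N.Normal]
    (htf : ∀ z : FreeGroup (Fin r) ⧸ (⁅N, N⁆ : Subgroup (FreeGroup (Fin r))),
      z ≠ 1 → ¬ IsOfFinOrder z)
    (φ : (FreeGroup (Fin r) ⧸ (⁅N, N⁆ : Subgroup (FreeGroup (Fin r)))) →*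
        Magnus r (FreeGroup (Fin r) ⧸ N))
    (hinj : Function.Injective φ)
    (hgen : ∀ i : Fin r, φ (QuotientGroup.mk (FreeGroup.of i)) =
      ⟨QuotientGroup.mk (FreeGroup.of i), Pi.single i 1⟩)
    (x y : FreeGroup (Fin r) ⧸ (⁅N, N⁆ : Subgroup (FreeGroup (Fin r)))) :
    IsConj x y ↔ IsConj (φ x) (φ y) := by
  classical
  constructor
  · intro h
    rw [isConj_iff] at h ⊢
    obtain ⟨c, hc⟩ := h
    exact ⟨φ c, by rw [← map_inv, ← map_mul, ← map_mul, hc]⟩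
  · intro h
    rw [isConj_iff] at h ⊢
    obtain ⟨m, hm⟩ := h
    have hφ : ∀ f : FreeGroup (Fin r), φ (QuotientGroup.mk f) = RS.Psi (RS.qn N) f := by
      intro f
      have hcomp : φ.comp (QuotientGroup.mk' (⁅N, N⁆ : Subgroup (FreeGroup (Fin r)))) =
          RS.Psi (RS.qn N) := by
        apply FreeGroup.ext_hom
        intro i
        rw [MonoidHom.comp_apply, QuotientGroup.mk'_apply, hgen, RS.Psi_of]
        rfl
      exact congrArg (fun h => h f) hcomp
    have hz : ∀ z : FreeGroup (Fin r) ⧸ (⁅N, N⁆ : Subgroup (FreeGroup (Fin r))),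
        RS.alph (RS.qn N) ((φ z).u) = MonoidAlgebra.single ((φ z).g) 1 - 1 := by
      intro z
      have hrep : φ z = RS.Psi (RS.qn N) z.out := by rw [← hφ, QuotientGroup.out_eq']
      rw [hrep, RS.fundId]
    obtain ⟨t, ht⟩ : ∃ t', (φ t').g = m.g := by
      refine ⟨QuotientGroup.mk (m.g.out), ?_⟩
      rw [hφ, RS.PsiQ_g, QuotientGroup.out_eq']
    set x' := t * x * t⁻¹ with hx'
    set m' := m * (φ t)⁻¹ with hm'
    have hm'g : m'.g = 1 := by
      rw [hm', Magnus.mul_g, Magnus.inv_g, ht, mul_inv_cancel]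
    have hconj : m' * φ x' * m'⁻¹ = φ y := by
      have : m' * φ x' * m'⁻¹ = m * φ x * m⁻¹ := by
        rw [hm', hx', map_mul, map_mul, map_inv]
        group
      rw [this, hm]
    set g := (φ x').g with hg
    set w := m'.u with hw
    have hm'eq : m' = (⟨1, w⟩ : Magnus r (FreeGroup (Fin r) ⧸ N)) := Magnus.ext hm'g rfl
    have hyu : φ y = ⟨g, fun i => (φ x').u i + (1 - MonoidAlgebra.single g 1) * w i⟩ := by
      rw [← hconj, hm'eq, RS.conj_one]
    have hbw : (1 - MonoidAlgebra.single g 1) * RS.alph (RS.qn N) w = 0 := by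
      have h1 := hz y
      have h2 := hz x'
      rw [hyu] at h1
      have hsplit : RS.alph (RS.qn N)
            (fun i => (φ x').u i + (1 - MonoidAlgebra.single g 1) * w i) =
          RS.alph (RS.qn N) (φ x').u +
            (1 - MonoidAlgebra.single g 1) * RS.alph (RS.qn N) w := by
        have hsum : (fun i => (φ x').u i + (1 - MonoidAlgebra.single g 1) * w i) =
            ((φ x').u + fun i => (1 - MonoidAlgebra.single g 1) * w i) := rfl
        rw [hsum, RS.alph_add, RS.alph_mulLeft]
      have h1' : RS.alph (RS.qn N) (φ x').u +
          (1 - MonoidAlgebra.single g 1) * RS.alph (RS.qn N) w =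
          MonoidAlgebra.single g 1 - 1 := by
        rw [← hsplit]; exact h1
      rw [h2, ← hg] at h1'
      rwa [add_eq_left] at h1'
    obtain ⟨ρ, hρ0, hρ⟩ := RS.key N g w hbw
    obtain ⟨fc, hfc⟩ := RS.alph_zero_mem N ρ hρ0
    set c : FreeGroup (Fin r) ⧸ (⁅N, N⁆ : Subgroup (FreeGroup (Fin r))) :=
      QuotientGroup.mk fc with hcdef
    have hφc : φ c = ⟨1, ρ⟩ := by rw [hcdef, hφ, hfc]
    have hcx : φ (c * x' * c⁻¹) = φ y := by
      rw [map_mul, map_mul, map_inv, hφc, RS.conj_one, hyu]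
      refine Magnus.ext rfl ?_
      funext i
      show (φ x').u i + (1 - MonoidAlgebra.single g 1) * ρ i =
        (φ x').u i + (1 - MonoidAlgebra.single g 1) * w i
      rw [hρ i]
    refine ⟨c * t, ?_⟩
    have hfin : (c * t) * x * (c * t)⁻¹ = c * x' * c⁻¹ := by rw [hx']; group
    rw [hfin]
    exact hinj hcx
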